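/- Assume V(x) = ½‖∇ψ(x)‖² is convex, ψ is bounded from below, and let T > 0. Define J(T; w) = ∫₀^T (½‖w′(t)‖² + ½‖∇ψ(w(t))‖²) dt + ψ(w(T)) for C¹ functions w : [0, T] → H. Then a C¹ function u : [0, T] → H satisfies u′(t) = −∇ψ(u(t)) for all t ∈ [0, T] if and only if J(T; u) ≤ J(T; w) for every C¹ function w : [0, T] → H with w(0) = u(0). -/

import Mathlib

open Filter MeasureTheory Set InnerProductSpace

section AuxAll


variable {H : Type*} [NormedAddCommGroup H] [InnerProductSpace ℝ H] [CompleteSpace H]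
  {ψ : H → ℝ}

lemma my_grad_apply (x v : H) : ⟪gradient ψ x, v⟫_ℝ = fderiv ℝ ψ x v := by
  simp [gradient]

lemma my_grad_contDiff (hψ : ContDiff ℝ 2 ψ) : ContDiff ℝ 1 (gradient ψ) := by
  have : ContDiff ℝ 1 (fderiv ℝ ψ) := (hψ.fderiv_right (by norm_num))
  exact ((toDual ℝ H).symm.toContinuousLinearEquiv.contDiff).comp this

lemma my_symm_snd (hψ : ContDiff ℝ 2 ψ) (x a b : H) :
    ⟪(fderiv ℝ (gradient ψ) x) a, b⟫_ℝ = ⟪a, (fderiv ℝ (gradient ψ) x) b⟫_ℝ := by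
  have hd1 : ∀ y, HasFDerivAt ψ (fderiv ℝ ψ y) y := fun y =>
    (hψ.differentiable (by norm_num)).differentiableAt.hasFDerivAt
  have hc1 : ContDiff ℝ 1 (fderiv ℝ ψ) := hψ.fderiv_right (by norm_num)
  have hd2 : HasFDerivAt (fderiv ℝ ψ) (fderiv ℝ (fderiv ℝ ψ) x) x :=
    (hc1.differentiable (by norm_num)).differentiableAt.hasFDerivAt
  have hsymm := second_derivative_symmetric hd1 hd2
  have hB : HasFDerivAt (gradient ψ) (fderiv ℝ (gradient ψ) x) x :=
    ((my_grad_contDiff hψ).differentiable (by norm_num)).differentiableAt.hasFDerivAt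
  have key : ∀ c d : H, ⟪(fderiv ℝ (gradient ψ) x) c, d⟫_ℝ = (fderiv ℝ (fderiv ℝ ψ) x c) d := by
    intro c d
    have h1 : HasFDerivAt (fun y => ⟪gradient ψ y, d⟫_ℝ)
        ((innerSL ℝ d).comp (fderiv ℝ (gradient ψ) x)) x := by
      have := (innerSL ℝ d).hasFDerivAt.comp x hB
      simpa [Function.comp_def, real_inner_comm] using this
    have h2 : HasFDerivAt (fun y => fderiv ℝ ψ y d)
        ((fderiv ℝ (fderiv ℝ ψ) x).flip d) x := by
      have := hd2.clm_apply (hasFDerivAt_const d x)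
      simpa using this
    have heq : (fun y => ⟪gradient ψ y, d⟫_ℝ) = (fun y => fderiv ℝ ψ y d) := by
      funext y; rw [my_grad_apply]
    rw [heq] at h1
    have := h1.unique h2
    have := congrFun (congrArg (fun (L : H →L[ℝ] ℝ) => (L : H → ℝ)) this) c
    simpa [real_inner_comm] using this
  rw [key a b, real_inner_comm, key b a, hsymm]

lemma my_hasGradV (hψ : ContDiff ℝ 2 ψ) (x : H) :
    HasGradientAt (fun y => (1/2 : ℝ) * ‖gradient ψ y‖ ^ 2)
      ((fderiv ℝ (gradient ψ) x) (gradient ψ x)) x := by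
  have hc1 : ContDiff ℝ 1 (gradient ψ) := my_grad_contDiff hψ
  have hB : HasFDerivAt (gradient ψ) (fderiv ℝ (gradient ψ) x) x :=
    (hc1.differentiable (by norm_num)).differentiableAt.hasFDerivAt
  have hinner := (hB.inner ℝ hB).const_mul (1/2 : ℝ)
  rw [hasGradientAt_iff_hasFDerivAt]
  convert hinner using 2
  · rfl
  · rw [real_inner_self_eq_norm_sq]
  · ext v
    simp [fderivInnerCLM_apply, toDual_apply_apply]
    rw [← my_grad_apply]
    rw [my_symm_snd hψ, real_inner_comm ((fderiv ℝ (gradient ψ) x) v)]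
    ring

lemma my_contVg (hψ : ContDiff ℝ 2 ψ) :
    Continuous (fun y : H => (fderiv ℝ (gradient ψ) y) (gradient ψ y)) := by
  have hc1 : ContDiff ℝ 1 (gradient ψ) := my_grad_contDiff hψ
  exact (hc1.continuous_fderiv (by norm_num)).clm_apply hc1.continuous

-- FTC along a curve
lemma my_ftc_psi (hψ : ContDiff ℝ 2 ψ) {T : ℝ} (hT : 0 < T) {w w' : ℝ → H}
    (hw : ∀ t ∈ Icc (0:ℝ) T, HasDerivWithinAt w (w' t) (Icc 0 T) t)
    (hw' : ContinuousOn w' (Icc 0 T)) :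
    ∫ t in (0:ℝ)..T, ⟪gradient ψ (w t), w' t⟫_ℝ = ψ (w T) - ψ (w 0) := by
  have hwc : ContinuousOn w (Icc 0 T) := fun t ht => (hw t ht).continuousWithinAt
  have hgc : Continuous (gradient ψ) := (my_grad_contDiff hψ).continuous
  have hint : IntervalIntegrable (fun t => ⟪gradient ψ (w t), w' t⟫_ℝ) volume 0 T := by
    apply ContinuousOn.intervalIntegrable
    rw [uIcc_of_le hT.le]
    exact (hgc.comp_continuousOn hwc).inner hw'
  refine intervalIntegral.integral_eq_sub_of_hasDeriv_right_of_le hT.le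
    ((hψ.continuous).comp_continuousOn hwc) (fun t ht => ?_) hint
  have hψd : HasFDerivAt ψ (fderiv ℝ ψ (w t)) (w t) :=
    ((hψ.differentiable (by norm_num)) (w t)).hasFDerivAt
  have ht' : t ∈ Icc (0:ℝ) T := Ioo_subset_Icc_self ht
  have hda : HasDerivAt w (w' t) t :=
    (hw t ht').hasDerivAt (Icc_mem_nhds ht.1 ht.2)
  have := hψd.comp_hasDerivAt t hda
  rw [my_grad_apply]
  exact this.hasDerivWithinAt

-- the energy identity
lemma my_identity (hψ : ContDiff ℝ 2 ψ) {T : ℝ} (hT : 0 < T) {w w' : ℝ → H}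
    (hw : ∀ t ∈ Icc (0:ℝ) T, HasDerivWithinAt w (w' t) (Icc 0 T) t)
    (hw' : ContinuousOn w' (Icc 0 T)) :
    (∫ t in (0:ℝ)..T, ((1/2 : ℝ) * ‖w' t‖ ^ 2 + (1/2 : ℝ) * ‖gradient ψ (w t)‖ ^ 2)) + ψ (w T)
      = (∫ t in (0:ℝ)..T, (1/2 : ℝ) * ‖w' t + gradient ψ (w t)‖ ^ 2) + ψ (w 0) := by
  have hwc : ContinuousOn w (Icc 0 T) := fun t ht => (hw t ht).continuousWithinAt
  have hgc : Continuous (gradient ψ) := (my_grad_contDiff hψ).continuous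
  have hgwc : ContinuousOn (fun t => gradient ψ (w t)) (Icc 0 T) := hgc.comp_continuousOn hwc
  have h1 : IntervalIntegrable (fun t => (1/2 : ℝ) * ‖w' t + gradient ψ (w t)‖ ^ 2) volume 0 T := by
    apply ContinuousOn.intervalIntegrable
    rw [uIcc_of_le hT.le]
    exact continuousOn_const.mul ((hw'.add hgwc).norm.pow 2)
  have h2 : IntervalIntegrable (fun t => ⟪gradient ψ (w t), w' t⟫_ℝ) volume 0 T := by
    apply ContinuousOn.intervalIntegrable
    rw [uIcc_of_le hT.le]
    exact hgwc.inner hw'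
  have key : ∀ t, (1/2 : ℝ) * ‖w' t‖ ^ 2 + (1/2 : ℝ) * ‖gradient ψ (w t)‖ ^ 2
      = (1/2 : ℝ) * ‖w' t + gradient ψ (w t)‖ ^ 2 - ⟪gradient ψ (w t), w' t⟫_ℝ := by
    intro t
    have := norm_add_sq_real (w' t) (gradient ψ (w t))
    rw [this, real_inner_comm]
    ring
  have : (∫ t in (0:ℝ)..T, ((1/2 : ℝ) * ‖w' t‖ ^ 2 + (1/2 : ℝ) * ‖gradient ψ (w t)‖ ^ 2))
      = (∫ t in (0:ℝ)..T, (1/2 : ℝ) * ‖w' t + gradient ψ (w t)‖ ^ 2)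
        - ∫ t in (0:ℝ)..T, ⟪gradient ψ (w t), w' t⟫_ℝ := by
    rw [← intervalIntegral.integral_sub h1 h2]
    congr 1; funext t; exact key t
  rw [this, my_ftc_psi hψ hT hw hw']
  ring



lemma my_zero_of_integral {H : Type*} [NormedAddCommGroup H] [InnerProductSpace ℝ H]
    {T : ℝ} (hT : 0 < T) {h : ℝ → H} (hc : Continuous h)
    (hint : (∫ t in (0:ℝ)..T, ‖h t‖ ^ 2) = 0) : ∀ t ∈ Icc (0:ℝ) T, h t = 0 := by
  intro t₀ ht₀
  by_contra hne
  have hpos : 0 < ‖h t₀‖ ^ 2 := by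
    have := norm_pos_iff.mpr hne
    positivity
  set c := ‖h t₀‖ ^ 2 with hc0
  have hcont : ContinuousAt (fun t => ‖h t‖ ^ 2) t₀ := ((hc.norm.pow 2)).continuousAt
  obtain ⟨δ, hδ, hball⟩ := Metric.continuousAt_iff.mp hcont (c/2) (by positivity)
  set α := max 0 (t₀ - δ/2) with hα
  set β := min T (t₀ + δ/2) with hβ
  have hα0 : 0 ≤ α := le_max_left _ _
  have hβT : β ≤ T := min_le_left _ _
  have hαβ : α < β := by
    have h1 : (0:ℝ) < β := lt_min hT (by have := ht₀.1; linarith)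
    have h2 : t₀ - δ/2 < β := lt_min (by have := ht₀.2; linarith) (by linarith)
    exact max_lt h1 h2
  have hlow : ∀ s ∈ Icc α β, c/2 ≤ ‖h s‖ ^ 2 := by
    intro s hs
    have hd : dist s t₀ < δ := by
      rw [Real.dist_eq, abs_lt]
      have h1 : α ≤ s := hs.1
      have h2 : s ≤ β := hs.2
      have := le_max_right 0 (t₀ - δ/2)
      have := min_le_right T (t₀ + δ/2)
      constructor <;> nlinarith
    have := hball hd
    rw [Real.dist_eq, abs_lt] at this
    linarith [this.1]
  have hi1 : IntervalIntegrable (fun t => ‖h t‖ ^ 2) volume α β :=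
    ((hc.norm.pow 2)).intervalIntegrable _ _
  have hi2 : IntervalIntegrable (fun t => ‖h t‖ ^ 2) volume 0 T :=
    ((hc.norm.pow 2)).intervalIntegrable _ _
  have hmono : (∫ t in α..β, ‖h t‖ ^ 2) ≤ ∫ t in (0:ℝ)..T, ‖h t‖ ^ 2 := by
    apply intervalIntegral.integral_mono_interval hα0 hαβ.le hβT _ hi2
    filter_upwards with t using by positivity
  have hconst : (β - α) * c / 2 ≤ ∫ t in α..β, ‖h t‖ ^ 2 := by
    have := intervalIntegral.integral_mono_on hαβ.le (intervalIntegrable_const) hi1 hlow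
    simpa using this
  nlinarith [hconst, hmono]


variable {H : Type*} [NormedAddCommGroup H] [InnerProductSpace ℝ H] [CompleteSpace H]
  {ψ : H → ℝ}

omit [CompleteSpace H] in
lemma my_hasDerivAt_half_sq (c d : H) (x : ℝ) :
    HasDerivAt (fun x : ℝ => (1/2 : ℝ) * ‖c + x • d‖ ^ 2) ⟪c + x • d, d⟫_ℝ x := by
  have heq : (fun x : ℝ => (1/2 : ℝ) * ‖c + x • d‖ ^ 2)
      = fun x : ℝ => (1/2 : ℝ) * ‖c‖ ^ 2 + x * ⟪c, d⟫_ℝ + x ^ 2 * ((1/2 : ℝ) * ‖d‖ ^ 2) := by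
    funext y
    rw [norm_add_sq_real, real_inner_smul_right, norm_smul]
    simp [mul_pow, sq_abs]
    ring
  rw [heq]
  have h1 : HasDerivAt (fun y : ℝ => (1/2 : ℝ) * ‖c‖ ^ 2 + y * ⟪c, d⟫_ℝ
      + y ^ 2 * ((1/2 : ℝ) * ‖d‖ ^ 2))
      (⟪c, d⟫_ℝ + (2 * x) * ((1/2 : ℝ) * ‖d‖ ^ 2)) x := by
    have ha : HasDerivAt (fun y : ℝ => y * ⟪c, d⟫_ℝ) ⟪c, d⟫_ℝ x := by
      simpa using (hasDerivAt_id x).mul_const ⟪c, d⟫_ℝ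
    have hb : HasDerivAt (fun y : ℝ => y ^ 2 * ((1/2 : ℝ) * ‖d‖ ^ 2))
        ((2 * x) * ((1/2 : ℝ) * ‖d‖ ^ 2)) x := by
      have := ((hasDerivAt_pow 2 x)).mul_const ((1/2 : ℝ) * ‖d‖ ^ 2)
      simpa [mul_comm] using this
    have := ((hasDerivAt_const x ((1/2 : ℝ) * ‖c‖ ^ 2)).add ha).add hb
    rw [zero_add] at this; exact this
  convert h1 using 1
  rw [inner_add_left, real_inner_smul_left, real_inner_self_eq_norm_sq]
  ring

lemma my_firstVar (hψ : ContDiff ℝ 2 ψ) {T : ℝ} (hT : 0 < T)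
    {u u' : ℝ → H}
    (hu : ∀ t ∈ Icc (0:ℝ) T, HasDerivWithinAt u (u' t) (Icc 0 T) t)
    (hu' : ContinuousOn u' (Icc 0 T))
    (hmin : ∀ w w' : ℝ → H, (∀ t ∈ Icc (0:ℝ) T, HasDerivWithinAt w (w' t) (Icc 0 T) t) →
        ContinuousOn w' (Icc 0 T) → w 0 = u 0 →
        (∫ t in (0:ℝ)..T, ((1/2 : ℝ) * ‖u' t‖ ^ 2 + (1/2 : ℝ) * ‖gradient ψ (u t)‖ ^ 2)) +
            ψ (u T) ≤
          (∫ t in (0:ℝ)..T, ((1/2 : ℝ) * ‖w' t‖ ^ 2 + (1/2 : ℝ) * ‖gradient ψ (w t)‖ ^ 2)) +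
            ψ (w T))
    {φ φ' : ℝ → H}
    (hφ : ∀ t ∈ Icc (0:ℝ) T, HasDerivWithinAt φ (φ' t) (Icc 0 T) t)
    (hφ' : ContinuousOn φ' (Icc 0 T)) (hφ0 : φ 0 = 0) :
    (∫ t in (0:ℝ)..T, (⟪u' t, φ' t⟫_ℝ
        + ⟪(fderiv ℝ (gradient ψ) (u t)) (gradient ψ (u t)), φ t⟫_ℝ))
      + ⟪gradient ψ (u T), φ T⟫_ℝ = 0 := by
  set Vg : H → H := fun y => (fderiv ℝ (gradient ψ) y) (gradient ψ y) with hVg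
  have hVgc : Continuous Vg := my_contVg hψ
  have hgc : Continuous (gradient ψ) := (my_grad_contDiff hψ).continuous
  have huc : ContinuousOn u (Icc 0 T) := fun t ht => (hu t ht).continuousWithinAt
  have hφc : ContinuousOn φ (Icc 0 T) := fun t ht => (hφ t ht).continuousWithinAt
  set F : ℝ → ℝ → ℝ := fun x t => (1/2 : ℝ) * ‖u' t + x • φ' t‖ ^ 2
      + (1/2 : ℝ) * ‖gradient ψ (u t + x • φ t)‖ ^ 2 with hF
  set F' : ℝ → ℝ → ℝ := fun x t => ⟪u' t + x • φ' t, φ' t⟫_ℝ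
      + ⟪Vg (u t + x • φ t), φ t⟫_ℝ with hF'
  -- continuity of F x and F' x on Icc 0 T
  have hFxc : ∀ x : ℝ, ContinuousOn (F x) (Icc 0 T) := by
    intro x
    apply ContinuousOn.add
    · exact continuousOn_const.mul (((hu'.add (hφ'.const_smul x)).norm).pow 2)
    · exact continuousOn_const.mul
        (((hgc.comp_continuousOn (huc.add (hφc.const_smul x))).norm).pow 2)
  have hF'xc : ∀ x : ℝ, ContinuousOn (F' x) (Icc 0 T) := by
    intro x
    apply ContinuousOn.add
    · exact (hu'.add (hφ'.const_smul x)).inner hφ'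
    · exact ((hVgc.comp_continuousOn (huc.add (hφc.const_smul x)))).inner hφc
  have hIoc : Set.uIoc (0:ℝ) T ⊆ Icc 0 T := by
    rw [uIoc_of_le hT.le]; exact Ioc_subset_Icc_self
  -- the bound on F' over ball 0 1 × Icc 0 T
  obtain ⟨C, hC⟩ : ∃ C, ∀ p ∈ (Icc (-1:ℝ) 1 ×ˢ Icc (0:ℝ) T), ‖F' p.1 p.2‖ ≤ C := by
    apply IsCompact.exists_bound_of_continuousOn ((isCompact_Icc).prod isCompact_Icc)
    have h2 : ContinuousOn (fun p : ℝ × ℝ => u' p.2) (Icc (-1:ℝ) 1 ×ˢ Icc (0:ℝ) T) :=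
      hu'.comp continuous_snd.continuousOn (fun p hp => hp.2)
    have h3 : ContinuousOn (fun p : ℝ × ℝ => φ' p.2) (Icc (-1:ℝ) 1 ×ˢ Icc (0:ℝ) T) :=
      hφ'.comp continuous_snd.continuousOn (fun p hp => hp.2)
    have h4 : ContinuousOn (fun p : ℝ × ℝ => u p.2) (Icc (-1:ℝ) 1 ×ˢ Icc (0:ℝ) T) :=
      huc.comp continuous_snd.continuousOn (fun p hp => hp.2)
    have h5 : ContinuousOn (fun p : ℝ × ℝ => φ p.2) (Icc (-1:ℝ) 1 ×ˢ Icc (0:ℝ) T) :=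
      hφc.comp continuous_snd.continuousOn (fun p hp => hp.2)
    have h1 : ContinuousOn (fun p : ℝ × ℝ => p.1) (Icc (-1:ℝ) 1 ×ˢ Icc (0:ℝ) T) :=
      continuous_fst.continuousOn
    exact ((h2.add (h1.smul h3)).inner h3).add
      ((hVgc.comp_continuousOn (h4.add (h1.smul h5))).inner h5)
  -- derivative of x ↦ F x t
  have h_diff : ∀ t ∈ Icc (0:ℝ) T, ∀ x : ℝ, HasDerivAt (fun x => F x t) (F' x t) x := by
    intro t ht x
    have hpart1 : HasDerivAt (fun x : ℝ => (1/2 : ℝ) * ‖u' t + x • φ' t‖ ^ 2)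
        ⟪u' t + x • φ' t, φ' t⟫_ℝ x := my_hasDerivAt_half_sq _ _ _
    have hline : HasDerivAt (fun x : ℝ => u t + x • φ t) (φ t) x := by
      simpa using ((hasDerivAt_id x).smul_const (φ t)).const_add (u t)
    have hpart2 : HasDerivAt (fun x : ℝ => (1/2 : ℝ) * ‖gradient ψ (u t + x • φ t)‖ ^ 2)
        ⟪Vg (u t + x • φ t), φ t⟫_ℝ x := by
      have hg := (my_hasGradV hψ (u t + x • φ t)).hasFDerivAt
      have := hg.comp_hasDerivAt x hline
      simpa [toDual_apply_apply, Function.comp_def, hVg] using this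
    exact hpart1.add hpart2
  -- differentiate under the integral sign
  have key : HasDerivAt (fun x : ℝ => ∫ t in (0:ℝ)..T, F x t) (∫ t in (0:ℝ)..T, F' 0 t) 0 := by
    have := (intervalIntegral.hasDerivAt_integral_of_dominated_loc_of_deriv_le
      (F := F) (F' := F') (x₀ := (0:ℝ)) (a := (0:ℝ)) (b := T) (μ := volume)
      (bound := fun _ => C) (s := Metric.ball 0 1) (Metric.ball_mem_nhds _ one_pos)
      (Eventually.of_forall (fun x => ((hFxc x).mono hIoc).aestronglyMeasurable measurableSet_uIoc))
      (((hFxc 0).mono (by rw [uIcc_of_le hT.le])).intervalIntegrable)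
      (((hF'xc 0).mono hIoc).aestronglyMeasurable measurableSet_uIoc)
      (Eventually.of_forall (fun t ht x hx => ?_))
      intervalIntegrable_const
      (Eventually.of_forall (fun t ht x _ => h_diff t (hIoc ht) x))).2
    · exact this
    · apply hC (x, t)
      constructor
      · have := mem_ball_iff_norm.mp hx
        simp only [sub_zero, Real.norm_eq_abs] at this
        exact ⟨by linarith [abs_lt.mp this |>.1], by linarith [abs_lt.mp this |>.2]⟩
      · exact hIoc ht
  -- derivative of the endpoint term
  have hend : HasDerivAt (fun x : ℝ => ψ (u T + x • φ T)) ⟪gradient ψ (u T), φ T⟫_ℝ 0 := by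
    have hline : HasDerivAt (fun x : ℝ => u T + x • φ T) (φ T) (0:ℝ) := by
      simpa using ((hasDerivAt_id (0:ℝ)).smul_const (φ T)).const_add (u T)
    have hψd : HasFDerivAt ψ (fderiv ℝ ψ (u T)) (u T) :=
      ((hψ.differentiable (by norm_num)) (u T)).hasFDerivAt
    have hψd' : HasFDerivAt ψ (fderiv ℝ ψ (u T + (0:ℝ) • φ T)) (u T + (0:ℝ) • φ T) := by
      simpa using hψd
    have := hψd'.comp_hasDerivAt (0:ℝ) hline
    simpa [my_grad_apply, Function.comp_def] using this
  -- the full function and its minimality at 0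
  set f : ℝ → ℝ := fun x => (∫ t in (0:ℝ)..T, F x t) + ψ (u T + x • φ T) with hf
  have hfd : HasDerivAt f ((∫ t in (0:ℝ)..T, F' 0 t) + ⟪gradient ψ (u T), φ T⟫_ℝ) 0 :=
    key.add hend
  have hmin0 : IsLocalMin f 0 := by
    apply Filter.Eventually.of_forall
    intro x
    have hw : ∀ t ∈ Icc (0:ℝ) T, HasDerivWithinAt (fun t => u t + x • φ t)
        (u' t + x • φ' t) (Icc 0 T) t :=
      fun t ht => (hu t ht).add ((hφ t ht).const_smul x)
    have hw' : ContinuousOn (fun t => u' t + x • φ' t) (Icc 0 T) :=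
      hu'.add (hφ'.const_smul x)
    have hw0 : u 0 + x • φ 0 = u 0 := by rw [hφ0]; simp
    have := hmin (fun t => u t + x • φ t) (fun t => u' t + x • φ' t) hw hw' hw0
    have hf0 : f 0 = (∫ t in (0:ℝ)..T,
        ((1/2 : ℝ) * ‖u' t‖ ^ 2 + (1/2 : ℝ) * ‖gradient ψ (u t)‖ ^ 2)) + ψ (u T) := by
      simp only [hf, hF, zero_smul, add_zero]
    rw [hf0]
    exact this
  have hzero := hmin0.hasDerivAt_eq_zero hfd
  have hcongr : (∫ t in (0:ℝ)..T, F' 0 t)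
      = ∫ t in (0:ℝ)..T, (⟪u' t, φ' t⟫_ℝ
          + ⟪(fderiv ℝ (gradient ψ) (u t)) (gradient ψ (u t)), φ t⟫_ℝ) := by
    apply intervalIntegral.integral_congr
    intro t _
    simp [hF', hVg]
  rw [← hcongr]
  exact hzero


lemma my_backward (hψ : ContDiff ℝ 2 ψ) {T : ℝ} (hT : 0 < T)
    {u u' : ℝ → H}
    (hu : ∀ t ∈ Icc (0:ℝ) T, HasDerivWithinAt u (u' t) (Icc 0 T) t)
    (hu' : ContinuousOn u' (Icc 0 T))
    (hmin : ∀ w w' : ℝ → H, (∀ t ∈ Icc (0:ℝ) T, HasDerivWithinAt w (w' t) (Icc 0 T) t) →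
        ContinuousOn w' (Icc 0 T) → w 0 = u 0 →
        (∫ t in (0:ℝ)..T, ((1/2 : ℝ) * ‖u' t‖ ^ 2 + (1/2 : ℝ) * ‖gradient ψ (u t)‖ ^ 2)) +
            ψ (u T) ≤
          (∫ t in (0:ℝ)..T, ((1/2 : ℝ) * ‖w' t‖ ^ 2 + (1/2 : ℝ) * ‖gradient ψ (w t)‖ ^ 2)) +
            ψ (w T)) :
    ∀ t ∈ Icc (0:ℝ) T, u' t = -(gradient ψ (u t)) := by
  have hgc : Continuous (gradient ψ) := (my_grad_contDiff hψ).continuous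
  have hVgc : Continuous (fun y : H => (fderiv ℝ (gradient ψ) y) (gradient ψ y)) := my_contVg hψ
  have huc : ContinuousOn u (Icc 0 T) := fun t ht => (hu t ht).continuousWithinAt
  -- extended versions
  set uE : ℝ → H := IccExtend hT.le ((Icc (0:ℝ) T).restrict u') with huE
  have huEc : Continuous uE := hu'.restrict.Icc_extend'
  have huEeq : ∀ t ∈ Icc (0:ℝ) T, uE t = u' t := fun t ht => IccExtend_of_mem hT.le _ ht
  set qE : ℝ → H := IccExtend hT.le ((Icc (0:ℝ) T).restrict
      (fun t => (fderiv ℝ (gradient ψ) (u t)) (gradient ψ (u t)))) with hqE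
  have hqEc : Continuous qE := ((hVgc.comp_continuousOn huc).restrict).Icc_extend'
  have hqEeq : ∀ t ∈ Icc (0:ℝ) T,
      qE t = (fderiv ℝ (gradient ψ) (u t)) (gradient ψ (u t)) :=
    fun t ht => IccExtend_of_mem hT.le _ ht
  -- primitive of qE
  set G : ℝ → H := fun t => ∫ s in (0:ℝ)..t, qE s with hG
  have hGd : ∀ t : ℝ, HasDerivAt G (qE t) t := fun t =>
    intervalIntegral.integral_hasDerivAt_right (hqEc.intervalIntegrable _ _)
      (hqEc.stronglyMeasurableAtFilter _ _) hqEc.continuousAt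
  have hGc : Continuous G := by
    rw [continuous_iff_continuousAt]; exact fun t => (hGd t).continuousAt
  have hG0 : G 0 = 0 := intervalIntegral.integral_same
  -- integration by parts: the master identity for all test curves
  have master : ∀ (φ φ' : ℝ → H), (∀ t ∈ Icc (0:ℝ) T, HasDerivWithinAt φ (φ' t) (Icc 0 T) t) →
      ContinuousOn φ' (Icc 0 T) → φ 0 = 0 →
      (∫ t in (0:ℝ)..T, ⟪uE t - G t, φ' t⟫_ℝ)
        + ⟪G T + gradient ψ (u T), φ T⟫_ℝ = 0 := by
    intro φ φ' hφ hφ' hφ0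
    have hφc : ContinuousOn φ (Icc 0 T) := fun t ht => (hφ t ht).continuousWithinAt
    have hFV := my_firstVar hψ hT hu hu' hmin hφ hφ' hφ0
    -- IBP : ∫ ⟪Vg (u t), φ t⟫ = ⟪G T, φ T⟫ - ∫ ⟪G t, φ' t⟫
    have hinteg1 : IntervalIntegrable (fun t => ⟪qE t, φ t⟫_ℝ) volume 0 T := by
      apply ContinuousOn.intervalIntegrable; rw [uIcc_of_le hT.le]
      exact hqEc.continuousOn.inner hφc
    have hinteg2 : IntervalIntegrable (fun t => ⟪G t, φ' t⟫_ℝ) volume 0 T := by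
      apply ContinuousOn.intervalIntegrable; rw [uIcc_of_le hT.le]
      exact hGc.continuousOn.inner hφ'
    have hIBP : (∫ t in (0:ℝ)..T, (⟪qE t, φ t⟫_ℝ + ⟪G t, φ' t⟫_ℝ))
        = ⟪G T, φ T⟫_ℝ - ⟪G 0, φ 0⟫_ℝ := by
      apply intervalIntegral.integral_eq_sub_of_hasDeriv_right_of_le hT.le
      · exact hGc.continuousOn.inner hφc
      · intro t ht
        have ht' : t ∈ Icc (0:ℝ) T := Ioo_subset_Icc_self ht
        have h1 : HasDerivWithinAt G (qE t) (Icc 0 T) t := (hGd t).hasDerivWithinAt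
        have h2 := h1.inner ℝ (hφ t ht')
        rw [add_comm]
        exact (h2.hasDerivAt (Icc_mem_nhds ht.1 ht.2)).hasDerivWithinAt
      · exact hinteg1.add hinteg2
    rw [hG0, hφ0] at hIBP
    simp only [inner_zero_left, sub_zero] at hIBP
    rw [intervalIntegral.integral_add hinteg1 hinteg2] at hIBP
    -- rewrite the first-variation integral
    have hintu : IntervalIntegrable (fun t => ⟪uE t, φ' t⟫_ℝ) volume 0 T := by
      apply ContinuousOn.intervalIntegrable; rw [uIcc_of_le hT.le]
      exact huEc.continuousOn.inner hφ'
    have hcongr : (∫ t in (0:ℝ)..T, (⟪u' t, φ' t⟫_ℝ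
          + ⟪(fderiv ℝ (gradient ψ) (u t)) (gradient ψ (u t)), φ t⟫_ℝ))
        = (∫ t in (0:ℝ)..T, ⟪uE t, φ' t⟫_ℝ) + (∫ t in (0:ℝ)..T, ⟪qE t, φ t⟫_ℝ) := by
      rw [← intervalIntegral.integral_add hintu hinteg1]
      apply intervalIntegral.integral_congr
      intro t ht
      rw [uIcc_of_le hT.le] at ht
      simp only [huEeq t ht, hqEeq t ht]
    rw [hcongr] at hFV
    have hsub : (∫ t in (0:ℝ)..T, ⟪uE t - G t, φ' t⟫_ℝ)
        = (∫ t in (0:ℝ)..T, ⟪uE t, φ' t⟫_ℝ) - (∫ t in (0:ℝ)..T, ⟪G t, φ' t⟫_ℝ) := by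
      rw [← intervalIntegral.integral_sub hintu hinteg2]
      apply intervalIntegral.integral_congr
      intro t _
      simp [inner_sub_left]
    rw [hsub, inner_add_left]
    have : (∫ t in (0:ℝ)..T, ⟪qE t, φ t⟫_ℝ) = ⟪G T, φ T⟫_ℝ - ∫ t in (0:ℝ)..T, ⟪G t, φ' t⟫_ℝ := by
      linarith [hIBP]
    rw [this] at hFV
    linarith [hFV]
  -- apply the master identity to linear test curves to find the constant
  set c₀ : H := ∫ t in (0:ℝ)..T, (uE t - G t) with hc₀
  have hintuG : IntervalIntegrable (fun t => uE t - G t) volume 0 T :=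
    (huEc.sub hGc).intervalIntegrable _ _
  have hlin : ∀ v : H, (∫ t in (0:ℝ)..T, ⟪uE t - G t, v⟫_ℝ) = ⟪c₀, v⟫_ℝ := by
    intro v
    have : (∫ t in (0:ℝ)..T, ⟪uE t - G t, v⟫_ℝ)
        = ∫ t in (0:ℝ)..T, (innerSL ℝ v) (uE t - G t) := by
      apply intervalIntegral.integral_congr
      intro t _
      simp [real_inner_comm]
    rw [this, (innerSL ℝ v).intervalIntegral_comp_comm hintuG]
    simp [real_inner_comm]
    rfl
  have hX : c₀ + T • (G T + gradient ψ (u T)) = 0 := by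
    rw [← inner_self_eq_zero (𝕜 := ℝ)]
    set X : H := c₀ + T • (G T + gradient ψ (u T)) with hXdef
    have hφv := master (fun t => t • X) (fun _ => X)
      (fun t ht => by simpa using ((hasDerivAt_id t).smul_const X).hasDerivWithinAt)
      continuousOn_const (by simp)
    rw [hlin X] at hφv
    have : ⟪G T + gradient ψ (u T), T • X⟫_ℝ = T * ⟪G T + gradient ψ (u T), X⟫_ℝ :=
      real_inner_smul_right _ _ _
    rw [this] at hφv
    have : ⟪X, X⟫_ℝ = ⟪c₀, X⟫_ℝ + T * ⟪G T + gradient ψ (u T), X⟫_ℝ := by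
      rw [hXdef, inner_add_left, real_inner_smul_left]
    rw [this, hφv]
  set cb : H := T⁻¹ • c₀ with hcb
  have hTcb : T • cb = c₀ := by
    show T • (T⁻¹ • c₀) = c₀
    rw [smul_smul, mul_inv_cancel₀ hT.ne', one_smul]
  have hGT : G T + gradient ψ (u T) = -cb := by
    have h1 : T • (G T + gradient ψ (u T)) = -c₀ := eq_neg_of_add_eq_zero_right hX
    have := congrArg (fun y => T⁻¹ • y) h1
    simp only [smul_smul, inv_mul_cancel₀ hT.ne', one_smul, smul_neg] at this
    rw [this, hcb]
  -- the special test curve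
  set φ₁ : ℝ → H := fun t => (∫ s in (0:ℝ)..t, (uE s - G s)) - t • cb with hφ₁
  have hφ₁d : ∀ t : ℝ, HasDerivAt φ₁ (uE t - G t - cb) t := by
    intro t
    have h1 : HasDerivAt (fun t => ∫ s in (0:ℝ)..t, (uE s - G s)) (uE t - G t) t :=
      intervalIntegral.integral_hasDerivAt_right ((huEc.sub hGc).intervalIntegrable _ _)
        ((huEc.sub hGc).stronglyMeasurableAtFilter _ _) (huEc.sub hGc).continuousAt
    have h2 : HasDerivAt (fun t : ℝ => t • cb) cb t := by
      simpa using (hasDerivAt_id t).smul_const cb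
    exact h1.sub h2
  have hφ₁0 : φ₁ 0 = 0 := by simp [hφ₁]
  have hφ₁T : φ₁ T = 0 := by
    show ((∫ s in (0:ℝ)..T, (uE s - G s)) - T • cb) = 0
    rw [hTcb, ← hc₀, sub_self]
  have hmast := master φ₁ (fun t => uE t - G t - cb)
    (fun t _ => (hφ₁d t).hasDerivWithinAt)
    ((huEc.sub hGc).continuousOn.sub continuousOn_const) hφ₁0
  rw [hφ₁T] at hmast
  simp only [inner_zero_right, add_zero] at hmast
  -- subtract the constant part
  have hconstpart : (∫ t in (0:ℝ)..T, ⟪cb, uE t - G t - cb⟫_ℝ) = 0 := by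
    have h1 : (∫ t in (0:ℝ)..T, ⟪cb, uE t - G t - cb⟫_ℝ)
        = ∫ t in (0:ℝ)..T, (innerSL ℝ cb) (uE t - G t - cb) := by
      apply intervalIntegral.integral_congr; intro t _; simp
    have hint : IntervalIntegrable (fun t => uE t - G t - cb) volume 0 T :=
      ((huEc.sub hGc).sub continuous_const).intervalIntegrable _ _
    rw [h1, (innerSL ℝ cb).intervalIntegral_comp_comm hint]
    have : (∫ t in (0:ℝ)..T, (uE t - G t - cb)) = c₀ - T • cb := by
      rw [intervalIntegral.integral_sub hintuG (intervalIntegrable_const),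
        intervalIntegral.integral_const, ← hc₀]
      norm_num
    rw [this, hTcb]
    simp
  have hsq : (∫ t in (0:ℝ)..T, ‖uE t - G t - cb‖ ^ 2) = 0 := by
    have hi1 : IntervalIntegrable (fun t => ⟪uE t - G t, uE t - G t - cb⟫_ℝ) volume 0 T := by
      apply ContinuousOn.intervalIntegrable; rw [uIcc_of_le hT.le]
      exact (huEc.sub hGc).continuousOn.inner
        (((huEc.sub hGc).sub continuous_const).continuousOn)
    have hi2 : IntervalIntegrable (fun t => ⟪cb, uE t - G t - cb⟫_ℝ) volume 0 T := by
      apply ContinuousOn.intervalIntegrable; rw [uIcc_of_le hT.le]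
      exact continuousOn_const.inner (((huEc.sub hGc).sub continuous_const).continuousOn)
    have : (∫ t in (0:ℝ)..T, ‖uE t - G t - cb‖ ^ 2)
        = (∫ t in (0:ℝ)..T, ⟪uE t - G t, uE t - G t - cb⟫_ℝ)
          - ∫ t in (0:ℝ)..T, ⟪cb, uE t - G t - cb⟫_ℝ := by
      rw [← intervalIntegral.integral_sub hi1 hi2]
      apply intervalIntegral.integral_congr
      intro t _
      simp only [← inner_sub_left, real_inner_self_eq_norm_sq]
    rw [this, hmast, hconstpart]
    ring
  have hzero := my_zero_of_integral hT ((huEc.sub hGc).sub continuous_const) hsq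
  -- so u' t = G t + cb on Icc
  have hu'eq : ∀ t ∈ Icc (0:ℝ) T, u' t = G t + cb := by
    intro t ht
    have := hzero t ht
    have h2 : uE t = G t + cb := by
      simp only [Pi.sub_apply] at this; rw [sub_sub, sub_eq_zero] at this; exact this
    rw [← huEeq t ht, h2]
  -- the function P and its ODE
  set uI : ℝ → H := IccExtend hT.le ((Icc (0:ℝ) T).restrict u) with huI
  have huIeq : ∀ t ∈ Icc (0:ℝ) T, uI t = u t := fun t ht => IccExtend_of_mem hT.le _ ht
  set P : ℝ → H := fun t => G t + cb + gradient ψ (u t) with hP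
  have hPT : P T = 0 := by
    rw [hP]
    simp only
    have : G T + cb + gradient ψ (u T) = (G T + gradient ψ (u T)) + cb := by abel
    rw [this, hGT]
    abel
  -- bound on the operator norms
  obtain ⟨M, hM⟩ : ∃ M, ∀ s ∈ Icc (0:ℝ) T, ‖fderiv ℝ (gradient ψ) (u s)‖ ≤ M := by
    apply IsCompact.exists_bound_of_continuousOn isCompact_Icc
    exact ((my_grad_contDiff hψ).continuous_fderiv (by norm_num)).comp_continuousOn huc
  set K : NNReal := (max M 0).toNNReal with hK
  set v : ℝ → H → H := fun t y => (fderiv ℝ (gradient ψ) (uI t)) y with hv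
  have hlip : ∀ t, LipschitzOnWith K (v t) univ := by
    intro t
    apply LipschitzWith.lipschitzOnWith
    apply (fderiv ℝ (gradient ψ) (uI t)).lipschitz.weaken
    have h1 : uI t = u (projIcc 0 T hT.le t) := rfl
    have h2 : ‖fderiv ℝ (gradient ψ) (u (projIcc 0 T hT.le t))‖ ≤ M :=
      hM _ (projIcc 0 T hT.le t).2
    rw [← NNReal.coe_le_coe]
    rw [coe_nnnorm, hK, Real.coe_toNNReal _ (le_max_right M 0), h1]
    exact le_trans h2 (le_max_left M 0)
  have hPc : ContinuousOn P (Icc 0 T) :=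
    ((hGc.continuousOn.add continuousOn_const)).add (hgc.comp_continuousOn huc)
  have hPd : ∀ t ∈ Ioc (0:ℝ) T, HasDerivWithinAt P (v t (P t)) (Iic t) t := by
    intro t ht
    have ht' : t ∈ Icc (0:ℝ) T := Ioc_subset_Icc_self ht
    have h1 : HasDerivWithinAt G (qE t) (Icc 0 T) t := (hGd t).hasDerivWithinAt
    have h2 : HasFDerivAt (gradient ψ) (fderiv ℝ (gradient ψ) (u t)) (u t) :=
      (((my_grad_contDiff hψ).differentiable (by norm_num)) (u t)).hasFDerivAt
    have h3 : HasDerivWithinAt (fun s => gradient ψ (u s))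
        ((fderiv ℝ (gradient ψ) (u t)) (u' t)) (Icc 0 T) t :=
      h2.comp_hasDerivWithinAt t (hu t ht')
    have h4 : HasDerivWithinAt P (qE t + (fderiv ℝ (gradient ψ) (u t)) (u' t)) (Icc 0 T) t := by
      have := (h1.add (hasDerivWithinAt_const t (Icc (0:ℝ) T) cb)).add h3
      rw [add_zero] at this; exact this
    have h5 : qE t + (fderiv ℝ (gradient ψ) (u t)) (u' t) = v t (P t) := by
      rw [hqEeq t ht', hv]
      simp only
      rw [huIeq t ht', hu'eq t ht', ← ContinuousLinearMap.map_add, hP]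
      congr 1
      abel
    rw [h5] at h4
    apply h4.mono_of_mem_nhdsWithin
    rw [mem_nhdsWithin]
    exact ⟨Ioi 0, isOpen_Ioi, ht.1, fun s hs => ⟨hs.1.le, hs.2.trans ht'.2⟩⟩
  have huniq : EqOn P (fun _ => (0:H)) (Icc 0 T) := by
    apply ODE_solution_unique_of_mem_Icc_left (fun t _ => hlip t) hPc hPd
      (fun t _ => mem_univ _) continuousOn_const _ (fun t _ => mem_univ _) (by rw [hPT])
    intro t ht
    have hz : v t ((fun _ : ℝ => (0:H)) t) = 0 := by
      simp [hv]
    rw [hz]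
    exact hasDerivWithinAt_const t (Iic t) (0:H)
  intro t ht
  have hP0 : P t = 0 := huniq ht
  have := hu'eq t ht
  rw [this]
  rw [hP] at hP0
  simp only at hP0
  have : gradient ψ (u t) = -(G t + cb) := by
    rw [← add_eq_zero_iff_eq_neg ] at *
    rw [← hP0]
    abel
  rw [this]
  abel


end AuxAll

/-- Proposition 9 (variational formulation): assume `V = ½‖∇ψ‖²` is convex and `ψ` is
bounded from below, and let `T > 0`. With
`J(T; w) = ∫₀ᵀ (½‖w'(t)‖² + ½‖∇ψ(w t)‖²) dt + ψ(w T)`, a `C¹` function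
`u : [0, T] → H` solves `u' = -∇ψ(u)` on `[0, T]` if and only if `J(T; u) ≤ J(T; w)`
for every `C¹` function `w : [0, T] → H` with `w 0 = u 0`. -/
theorem stmt_19 {H : Type*} [NormedAddCommGroup H] [InnerProductSpace ℝ H] [CompleteSpace H]
    (ψ : H → ℝ) (hψ : ContDiff ℝ 2 ψ)
    (hVconv : ConvexOn ℝ univ (fun x => (1/2 : ℝ) * ‖gradient ψ x‖ ^ 2))
    (hbdd : BddBelow (range ψ))
    (T : ℝ) (hT : 0 < T)
    (u u' : ℝ → H)
    (hu : ∀ t ∈ Icc (0:ℝ) T, HasDerivWithinAt u (u' t) (Icc 0 T) t)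
    (hu' : ContinuousOn u' (Icc 0 T)) :
    (∀ t ∈ Icc (0:ℝ) T, u' t = -(gradient ψ (u t))) ↔
      (∀ w w' : ℝ → H, (∀ t ∈ Icc (0:ℝ) T, HasDerivWithinAt w (w' t) (Icc 0 T) t) →
        ContinuousOn w' (Icc 0 T) → w 0 = u 0 →
        (∫ t in (0:ℝ)..T, ((1/2 : ℝ) * ‖u' t‖ ^ 2 + (1/2 : ℝ) * ‖gradient ψ (u t)‖ ^ 2)) +
            ψ (u T) ≤
          (∫ t in (0:ℝ)..T, ((1/2 : ℝ) * ‖w' t‖ ^ 2 + (1/2 : ℝ) * ‖gradient ψ (w t)‖ ^ 2)) +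
            ψ (w T)) := by
  constructor
  · intro hsol w w' hw hw' hw0
    rw [my_identity hψ hT hu hu', my_identity hψ hT hw hw', hw0]
    have hLHS : (∫ t in (0:ℝ)..T, (1/2 : ℝ) * ‖u' t + gradient ψ (u t)‖ ^ 2) = 0 := by
      have : (∫ t in (0:ℝ)..T, (1/2 : ℝ) * ‖u' t + gradient ψ (u t)‖ ^ 2)
          = ∫ t in (0:ℝ)..T, (0:ℝ) := by
        apply intervalIntegral.integral_congr
        intro t ht
        rw [uIcc_of_le hT.le] at ht
        simp [hsol t ht]
      rw [this]
      simp
    have hRHS : 0 ≤ (∫ t in (0:ℝ)..T, (1/2 : ℝ) * ‖w' t + gradient ψ (w t)‖ ^ 2) := by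
      apply intervalIntegral.integral_nonneg hT.le
      intro s _
      positivity
    rw [hLHS]
    linarith
  · intro hmin
    exact my_backward hψ hT hu hu' hmin
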